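/- If D is a dense subset of the open set Ω ⊆ ℝⁿ and f : D → ℝ is continuous, then the graph completion F(D,Ω,f) = [I(D,Ω,f), S(D,Ω,f)] is Hausdorff continuous on Ω, i.e., I(D,Ω,f) is lower semicontinuous, S(D,Ω,f) is upper semicontinuous, S(Ω,Ω,I(D,Ω,f)) = S(D,Ω,f), and I(Ω,Ω,S(D,Ω,f)) = I(D,Ω,f). -/

import Mathlib

open Metric

/-- ℝⁿ -/
abbrev Rn (n : ℕ) := EuclideanSpace ℝ (Fin n)

/-- Lower Baire operator `I(D,Ω,f)(x) = sup_{δ>0} inf { f y : y ∈ B_δ(x) ∩ D }`. -/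
noncomputable def lowerBaire {n : ℕ} (D : Set (Rn n)) (f : Rn n → EReal) (x : Rn n) : EReal :=
  ⨆ δ > (0 : ℝ), ⨅ y ∈ Metric.ball x δ ∩ D, f y

/-- Upper Baire operator `S(D,Ω,f)(x) = inf_{δ>0} sup { f y : y ∈ B_δ(x) ∩ D }`. -/
noncomputable def upperBaire {n : ℕ} (D : Set (Rn n)) (f : Rn n → EReal) (x : Rn n) : EReal :=
  ⨅ δ > (0 : ℝ), ⨆ y ∈ Metric.ball x δ ∩ D, f y

lemma lb_lsc {n : ℕ} (D : Set (Rn n)) (g : Rn n → EReal) :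
    LowerSemicontinuous (lowerBaire D g) := by
  intro x c hc
  rw [lowerBaire] at hc
  simp only [lt_iSup_iff] at hc
  obtain ⟨δ, hδ, hlt⟩ := hc
  filter_upwards [Metric.ball_mem_nhds x (half_pos hδ)] with x' hx'
  refine lt_of_lt_of_le hlt ?_
  refine le_trans (biInf_mono ?_) (le_iSup₂ (f := fun δ _ => ⨅ y ∈ Metric.ball x' δ ∩ D, g y)
    (δ/2) (half_pos hδ))
  intro y hy
  refine ⟨?_, hy.2⟩
  have h1 := mem_ball.1 hy.1
  have h2 := mem_ball.1 hx'
  rw [mem_ball]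
  calc dist y x ≤ dist y x' + dist x' x := dist_triangle _ _ _
    _ < δ/2 + δ/2 := add_lt_add h1 h2
    _ = δ := add_halves δ

lemma ub_usc {n : ℕ} (D : Set (Rn n)) (g : Rn n → EReal) :
    UpperSemicontinuous (upperBaire D g) := by
  intro x c hc
  rw [upperBaire] at hc
  simp only [iInf_lt_iff] at hc
  obtain ⟨δ, hδ, hlt⟩ := hc
  filter_upwards [Metric.ball_mem_nhds x (half_pos hδ)] with x' hx'
  refine lt_of_le_of_lt ?_ hlt
  refine le_trans (iInf₂_le (f := fun δ _ => ⨆ y ∈ Metric.ball x' δ ∩ D, g y)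
    (δ/2) (half_pos hδ)) (biSup_mono ?_)
  intro y hy
  refine ⟨?_, hy.2⟩
  have h1 := mem_ball.1 hy.1
  have h2 := mem_ball.1 hx'
  rw [mem_ball]
  calc dist y x ≤ dist y x' + dist x' x := dist_triangle _ _ _
    _ < δ/2 + δ/2 := add_lt_add h1 h2
    _ = δ := add_halves δ

lemma coe_f_le_lb {n : ℕ} (D : Set (Rn n)) (f : Rn n → ℝ) {y : Rn n}
    (hf : ContinuousWithinAt f D y) :
    (f y : EReal) ≤ lowerBaire D (fun z => (f z : EReal)) y := by
  refine le_of_forall_lt fun c hc => ?_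
  obtain ⟨r, hcr, hrf⟩ := EReal.lt_iff_exists_real_btwn.1 hc
  refine lt_of_lt_of_le hcr ?_
  have hrf' : r < f y := EReal.coe_lt_coe_iff.1 hrf
  obtain ⟨δ, hδ, hball⟩ := Metric.continuousWithinAt_iff.1 hf (f y - r) (by linarith)
  refine le_trans ?_ (le_iSup₂ (f := fun δ (_ : δ > (0:ℝ)) => ⨅ z ∈ ball y δ ∩ D, ((f z : EReal))) δ hδ)
  refine le_iInf₂ fun z hz => ?_
  have h := hball hz.2 (mem_ball.1 hz.1)
  rw [Real.dist_eq] at h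
  have := abs_lt.1 h
  exact EReal.coe_le_coe_iff.2 (by linarith [this.1])

lemma ub_le_coe_f {n : ℕ} (D : Set (Rn n)) (f : Rn n → ℝ) {y : Rn n}
    (hf : ContinuousWithinAt f D y) :
    upperBaire D (fun z => (f z : EReal)) y ≤ (f y : EReal) := by
  refine le_of_forall_gt fun c hc => ?_
  obtain ⟨r, hfr, hrc⟩ := EReal.lt_iff_exists_real_btwn.1 hc
  refine lt_of_le_of_lt ?_ hrc
  have hfr' : f y < r := EReal.coe_lt_coe_iff.1 hfr
  obtain ⟨δ, hδ, hball⟩ := Metric.continuousWithinAt_iff.1 hf (r - f y) (by linarith)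
  refine le_trans (iInf₂_le (f := fun δ (_ : δ > (0:ℝ)) => ⨆ z ∈ ball y δ ∩ D, ((f z : EReal))) δ hδ) ?_
  refine iSup₂_le fun z hz => ?_
  have h := hball hz.2 (mem_ball.1 hz.1)
  rw [Real.dist_eq] at h
  have := abs_lt.1 h
  exact EReal.coe_le_coe_iff.2 (by linarith [this.2])

lemma ball_inter_nonempty {n : ℕ} {D : Set (Rn n)} {y : Rn n} (hy : y ∈ closure D)
    {ε : ℝ} (hε : 0 < ε) : ∃ z, z ∈ ball y ε ∩ D := by
  obtain ⟨z, hzD, hz⟩ := Metric.mem_closure_iff.1 hy ε hε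
  exact ⟨z, mem_ball.2 (by rwa [dist_comm]), hzD⟩

theorem graphCompletion_Hcontinuous {n : ℕ} (Ω D : Set (Rn n)) (hΩ : IsOpen Ω)
    (hD : D ⊆ Ω) (hdense : Ω ⊆ closure D)
    (f : Rn n → ℝ) (hf : ContinuousOn f D) :
    LowerSemicontinuousOn (lowerBaire D (fun y => (f y : EReal))) Ω ∧
    UpperSemicontinuousOn (upperBaire D (fun y => (f y : EReal))) Ω ∧
    (∀ x ∈ Ω, upperBaire Ω (lowerBaire D (fun y => (f y : EReal))) x
        = upperBaire D (fun y => (f y : EReal)) x) ∧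
    (∀ x ∈ Ω, lowerBaire Ω (upperBaire D (fun y => (f y : EReal))) x
        = lowerBaire D (fun y => (f y : EReal)) x) := by
  set g : Rn n → EReal := fun y => (f y : EReal) with hg
  refine ⟨(lb_lsc D g).lowerSemicontinuousOn Ω, (ub_usc D g).upperSemicontinuousOn Ω, ?_, ?_⟩
  · -- upperBaire Ω (lowerBaire D g) = upperBaire D g on Ω
    intro x hx
    refine le_antisymm ?_ ?_
    · -- ≤ : for each δ, bound sup over ball∩Ω of I by sup over ball∩D of g
      refine le_iInf₂ fun δ hδ => ?_
      refine le_trans (iInf₂_le (f := fun δ (_ : δ > (0:ℝ)) =>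
        ⨆ y ∈ ball x δ ∩ Ω, lowerBaire D g y) δ hδ) ?_
      refine iSup₂_le fun y hy => ?_
      -- y ∈ ball x δ ∩ Ω; show lowerBaire D g y ≤ sup over ball x δ ∩ D
      refine iSup₂_le fun ε hε => ?_
      have hpos : 0 < min ε (δ - dist y x) :=
        lt_min hε (by have := mem_ball.1 hy.1; linarith)
      obtain ⟨z, hzb, hzD⟩ := ball_inter_nonempty (hdense hy.2) hpos
      have hzε : z ∈ ball y ε ∩ D := ⟨mem_ball.2 ((mem_ball.1 hzb).trans_le (min_le_left _ _)), hzD⟩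
      refine le_trans (iInf₂_le z hzε) ?_
      refine le_iSup₂ (f := fun (z : Rn n) (_ : z ∈ ball x δ ∩ D) => g z) z ⟨?_, hzD⟩
      rw [mem_ball]
      have h1 := (mem_ball.1 hzb).trans_le (min_le_right _ _)
      calc dist z x ≤ dist z y + dist y x := dist_triangle _ _ _
        _ < (δ - dist y x) + dist y x := by linarith
        _ = δ := by ring
    · -- ≥ : pointwise sup_D g ≤ sup_Ω I using g ≤ I on D
      refine le_iInf₂ fun δ hδ => ?_
      refine le_trans (iInf₂_le (f := fun δ (_ : δ > (0:ℝ)) =>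
        ⨆ y ∈ ball x δ ∩ D, g y) δ hδ) ?_
      refine iSup₂_le fun y hy => ?_
      refine le_trans (coe_f_le_lb D f (hf y hy.2)) ?_
      exact le_iSup₂ (f := fun (y : Rn n) (_ : y ∈ ball x δ ∩ Ω) => lowerBaire D g y)
        y ⟨hy.1, hD hy.2⟩
  · intro x hx
    refine le_antisymm ?_ ?_
    · -- lowerBaire Ω S ≤ lowerBaire D g: pointwise inf_Ω S ≤ inf_D g using S ≤ g on D
      refine iSup₂_le fun δ hδ => ?_
      refine le_trans ?_ (le_iSup₂ (f := fun δ (_ : δ > (0:ℝ)) =>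
        ⨅ y ∈ ball x δ ∩ D, g y) δ hδ)
      refine le_iInf₂ fun y hy => ?_
      refine le_trans ?_ (ub_le_coe_f D f (hf y hy.2))
      exact iInf₂_le (f := fun (y : Rn n) (_ : y ∈ ball x δ ∩ Ω) => upperBaire D g y)
        y ⟨hy.1, hD hy.2⟩
    · -- lowerBaire D g ≤ lowerBaire Ω S
      refine iSup₂_le fun δ hδ => ?_
      refine le_trans ?_ (le_iSup₂ (f := fun δ (_ : δ > (0:ℝ)) =>
        ⨅ y ∈ ball x δ ∩ Ω, upperBaire D g y) δ hδ)
      refine le_iInf₂ fun y hy => ?_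
      -- show inf over ball x δ ∩ D of g ≤ upperBaire D g y, for y ∈ ball x δ ∩ Ω
      refine le_iInf₂ fun ε hε => ?_
      have hpos : 0 < min ε (δ - dist y x) :=
        lt_min hε (by have := mem_ball.1 hy.1; linarith)
      obtain ⟨z, hzb, hzD⟩ := ball_inter_nonempty (hdense hy.2) hpos
      have hzε : z ∈ ball y ε ∩ D := ⟨mem_ball.2 ((mem_ball.1 hzb).trans_le (min_le_left _ _)), hzD⟩
      refine le_trans ?_ (le_iSup₂ (f := fun (z : Rn n) (_ : z ∈ ball y ε ∩ D) => g z) z hzε)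
      refine iInf₂_le (f := fun (z : Rn n) (_ : z ∈ ball x δ ∩ D) => g z) z ⟨?_, hzD⟩
      rw [mem_ball]
      have h1 := (mem_ball.1 hzb).trans_le (min_le_right _ _)
      calc dist z x ≤ dist z y + dist y x := dist_triangle _ _ _
        _ < (δ - dist y x) + dist y x := by linarith
        _ = δ := by ring
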